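/- arXiv:2207.11618 — 4 statements merged into one kernel-verified Lean document; each statement's English description precedes it below -/
import Mathlib

section
/- Let φ : ℝⁿ × ℝⁿ → ℝⁿ be twice continuously differentiable, set f(x) = φ(x,x), let x ∈ ℝⁿ, and let u : ℝ → ℝⁿ solve u̇(t) = f(u(t)) with u(0) = x on a neighborhood of 0. Let F : ℝ × ℝⁿ → ℝⁿ satisfy the scheme identity F(h,x) − x = (h/2)·(φ(F(h,x), x) + φ(x, F(h,x))) for all h in a neighborhood of 0, and assume h ↦ F(h,x) is differentiable at h = 0 with F(0,x) = x and (∂F/∂h)(0,x) = f(x). Then the local truncation error E(h) = u(h) − F(h,x) satisfies E(h) = O(h³) as h → 0; that is, h ↦ u(h) − F(h,x) is big-O of h ↦ h³ near 0. Hence the NSFD scheme is of second order. -/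
open Asymptotics Filter

section Aux

variable {E : Type*} [NormedAddCommGroup E] [NormedSpace ℝ E]

/-- Integrating an `O(t^k)` bound on the derivative of a function vanishing at `0`
gives an `O(t^(k+1))` bound on the function. -/
lemma nsfd_aux_isBigO_pow_succ {w w' : ℝ → E} {k : ℕ} (h0 : w 0 = 0)
    (hd : ∀ᶠ t in nhds (0 : ℝ), HasDerivAt w (w' t) t)
    (hO : w' =O[nhds (0 : ℝ)] fun t => t ^ k) :
    w =O[nhds (0 : ℝ)] fun t => t ^ (k + 1) := by
  obtain ⟨C, hC⟩ := hO.bound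
  obtain ⟨ε, hε, hball⟩ := Metric.eventually_nhds_iff_ball.1 (hd.and hC)
  rw [isBigO_iff]
  refine ⟨|C|, Metric.eventually_nhds_iff_ball.2 ⟨ε, hε, fun h hh => ?_⟩⟩
  have hh' : |h| < ε := by simpa [Real.dist_eq] using hh
  have habs : ∀ t ∈ Set.uIcc (0 : ℝ) h, |t| ≤ |h| := by
    intro t ht
    rw [abs_le]
    rcases Set.mem_uIcc.1 ht with ⟨h1, h2⟩ | ⟨h1, h2⟩ <;>
      constructor <;>
        linarith [le_abs_self h, neg_abs_le h, abs_nonneg h]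
  have hsub : ∀ t ∈ Set.uIcc (0 : ℝ) h, t ∈ Metric.ball (0 : ℝ) ε := by
    intro t ht
    have := habs t ht
    simp only [Metric.mem_ball, Real.dist_eq, sub_zero]
    linarith
  have key := (convex_uIcc (0 : ℝ) h).norm_image_sub_le_of_norm_hasDerivWithin_le
    (f := w) (f' := w') (C := |C| * |h| ^ k)
    (fun t ht => ((hball t (hsub t ht)).1).hasDerivWithinAt)
    (fun t ht => by
      have h1 := (hball t (hsub t ht)).2
      have h2 : ‖t ^ k‖ = |t| ^ k := by
        rw [Real.norm_eq_abs, abs_pow]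
      calc ‖w' t‖ ≤ C * ‖t ^ k‖ := h1
        _ ≤ |C| * |t| ^ k := by
            rw [h2]
            exact mul_le_mul_of_nonneg_right (le_abs_self C)
              (pow_nonneg (abs_nonneg t) k)
        _ ≤ |C| * |h| ^ k := by
            exact mul_le_mul_of_nonneg_left
              (pow_le_pow_left₀ (abs_nonneg t) (habs t ht) k) (abs_nonneg C))
    Set.left_mem_uIcc Set.right_mem_uIcc
  rw [h0, sub_zero, sub_zero] at key
  calc ‖w h‖ ≤ |C| * |h| ^ k * ‖h‖ := key
    _ = |C| * ‖h ^ (k + 1)‖ := by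
        rw [Real.norm_eq_abs, Real.norm_eq_abs, abs_pow, pow_succ]
        ring

/-- Quadratic Taylor remainder bound for a `C²` function. -/
lemma nsfd_aux_quadratic {F' : Type*} [NormedAddCommGroup F'] [NormedSpace ℝ F']
    {Ψ : E → F'} (hΨ : ContDiff ℝ 2 Ψ) (x : E) :
    (fun y => Ψ y - Ψ x - fderiv ℝ Ψ x (y - x)) =O[nhds x] fun y => ‖y - x‖ ^ 2 := by
  have hd1 : ContDiff ℝ 1 (fderiv ℝ Ψ) := hΨ.fderiv_right (by norm_num)
  obtain ⟨K, t, ht, hK⟩ := hd1.contDiffAt.exists_lipschitzOnWith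
  obtain ⟨ε, hε, hballt⟩ := Metric.mem_nhds_iff.1 ht
  rw [isBigO_iff]
  refine ⟨K, Metric.eventually_nhds_iff_ball.2 ⟨ε, hε, fun y hy => ?_⟩⟩
  have hy' : dist y x < ε := by simpa [Metric.mem_ball] using hy
  have hmem : Metric.closedBall x (dist y x) ⊆ t := fun z hz =>
    hballt (by
      simp only [Metric.mem_closedBall] at hz
      simp only [Metric.mem_ball]
      exact lt_of_le_of_lt hz hy')
  have hxmem : x ∈ Metric.closedBall x (dist y x) :=
    Metric.mem_closedBall_self dist_nonneg
  have key := (convex_closedBall x (dist y x)).norm_image_sub_le_of_norm_hasFDerivWithin_le'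
    (f := Ψ) (f' := fderiv ℝ Ψ) (φ := fderiv ℝ Ψ x) (C := (K : ℝ) * dist y x)
    (fun z _ => ((hΨ.differentiable (by norm_num)) z).hasFDerivAt.hasFDerivWithinAt)
    (fun z hz => by
      have h1 : dist (fderiv ℝ Ψ z) (fderiv ℝ Ψ x) ≤ (K : ℝ) * dist z x :=
        hK.dist_le_mul z (hmem hz) x (hmem hxmem)
      rw [dist_eq_norm] at h1
      refine h1.trans ?_
      have h2 : dist z x ≤ dist y x := Metric.mem_closedBall.1 hz
      exact mul_le_mul_of_nonneg_left h2 K.coe_nonneg)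
    hxmem (Metric.mem_closedBall.2 le_rfl)
  rw [dist_eq_norm] at key
  calc ‖Ψ y - Ψ x - fderiv ℝ Ψ x (y - x)‖ ≤ (K : ℝ) * ‖y - x‖ * ‖y - x‖ := key
    _ = (K : ℝ) * ‖‖y - x‖ ^ 2‖ := by
        rw [Real.norm_eq_abs, abs_pow, abs_norm, pow_two]
        ring

/-- Third-order expansion of the exact solution. -/
lemma nsfd_aux_exact {f : E → E} (hf : ContDiff ℝ 2 f) {u : ℝ → E} {x : E} {m : E}
    (hu0 : u 0 = x)
    (hu : ∀ᶠ t in nhds (0 : ℝ), HasDerivAt u (f (u t)) t)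
    (hm : fderiv ℝ f x (f x) = m) :
    (fun t => u t - x - t • f x - (t ^ 2 / 2) • m) =O[nhds (0 : ℝ)]
      fun t => t ^ 3 := by
  subst hm
  have hud : HasDerivAt u (f x) 0 := by
    have := hu.self_of_nhds
    rwa [hu0] at this
  have hut : Tendsto u (nhds 0) (nhds x) := by
    have := hud.continuousAt.tendsto
    rwa [hu0] at this
  have hfd : Differentiable ℝ f := hf.differentiable (by norm_num)
  have hg : ContDiff ℝ 1 (fun y => fderiv ℝ f y (f y)) :=
    (hf.fderiv_right (by norm_num)).clm_apply (hf.of_le (by norm_num))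
  have hgO : (fun t => fderiv ℝ f (u t) (f (u t)) - fderiv ℝ f x (f x))
      =O[nhds (0 : ℝ)] fun t => t := by
    have h1 : (fun y => fderiv ℝ f y (f y) - fderiv ℝ f x (f x)) =O[nhds x]
        fun y => y - x := ((hg.differentiable (by norm_num)) x).isBigO_sub
    have h2 : (fun t => u t - x) =O[nhds (0 : ℝ)] fun t => t := by
      simpa [hu0] using hud.hasFDerivAt.isBigO_sub
    exact (h1.comp_tendsto hut).trans h2
  have hw2d : ∀ᶠ t in nhds (0 : ℝ),
      HasDerivAt (fun s => f (u s) - f x - s • fderiv ℝ f x (f x))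
        (fderiv ℝ f (u t) (f (u t)) - fderiv ℝ f x (f x)) t := by
    filter_upwards [hu] with t ht
    have h1 : HasDerivAt (fun s => f (u s)) (fderiv ℝ f (u t) (f (u t))) t :=
      (hfd (u t)).hasFDerivAt.comp_hasDerivAt t ht
    have h2 : HasDerivAt (fun s : ℝ => s • fderiv ℝ f x (f x))
        (fderiv ℝ f x (f x)) t := by
      simpa using (hasDerivAt_id t).smul_const (fderiv ℝ f x (f x))
    exact (h1.sub_const (f x)).sub h2
  have hw2O : (fun t => f (u t) - f x - t • fderiv ℝ f x (f x))
      =O[nhds (0 : ℝ)] fun t => t ^ 2 := by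
    have h0 : (fun s => f (u s) - f x - s • fderiv ℝ f x (f x)) 0 = 0 := by
      simp [hu0]
    exact nsfd_aux_isBigO_pow_succ (k := 1) h0 hw2d (by simpa [pow_one] using hgO)
  have hwd : ∀ᶠ t in nhds (0 : ℝ),
      HasDerivAt (fun s => u s - x - s • f x - (s ^ 2 / 2) • fderiv ℝ f x (f x))
        (f (u t) - f x - t • fderiv ℝ f x (f x)) t := by
    filter_upwards [hu] with t ht
    have h2 : HasDerivAt (fun s : ℝ => s • f x) (f x) t := by
      simpa using (hasDerivAt_id t).smul_const (f x)
    have h3 : HasDerivAt (fun s : ℝ => (s ^ 2 / 2) • fderiv ℝ f x (f x))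
        (t • fderiv ℝ f x (f x)) t := by
      have h4 := ((hasDerivAt_pow 2 t).div_const 2).smul_const (fderiv ℝ f x (f x))
      convert h4 using 2
      simp
    exact ((ht.sub_const x).sub h2).sub h3
  have h0 : (fun s => u s - x - s • f x - (s ^ 2 / 2) • fderiv ℝ f x (f x)) 0 = 0 := by
    simp [hu0]
  exact nsfd_aux_isBigO_pow_succ (k := 2) h0 hwd hw2O

/-- Third-order expansion of the scheme map. -/
lemma nsfd_aux_scheme {Ψ : E → E} (hΨ : ContDiff ℝ 2 Ψ) {G : ℝ → E} {x c m : E}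
    (hΨx : Ψ x = c + c)
    (hs : ∀ᶠ h in nhds (0 : ℝ), G h - x = (h / 2) • Ψ (G h))
    (hG0 : G 0 = x) (hGd : HasDerivAt G c 0)
    (hmL : fderiv ℝ Ψ x c = m) :
    (fun h => G h - x - h • c - (h ^ 2 / 2) • m) =O[nhds (0 : ℝ)]
      fun h => h ^ 3 := by
  subst hmL
  have hGt : Tendsto G (nhds 0) (nhds x) := by
    have := hGd.continuousAt.tendsto
    rwa [hG0] at this
  have hGx : (fun h => G h - x) =O[nhds (0 : ℝ)] fun h => h := by
    simpa [hG0] using hGd.hasFDerivAt.isBigO_sub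
  have hhalf : (fun h : ℝ => h / 2) =O[nhds (0 : ℝ)] fun h => h :=
    ((isBigO_refl (fun h : ℝ => h) _).const_mul_left (1 / 2)).congr_left
      fun h => by ring
  have hΨO : (fun h => Ψ (G h) - Ψ x) =O[nhds (0 : ℝ)] fun h => h :=
    ((((hΨ.differentiable (by norm_num)) x).isBigO_sub).comp_tendsto hGt).trans hGx
  have hstep2 : (fun h => G h - x - h • c) =O[nhds (0 : ℝ)] fun h => h ^ 2 := by
    have heq : (fun h => G h - x - h • c) =ᶠ[nhds (0 : ℝ)]
        fun h => (h / 2) • (Ψ (G h) - Ψ x) := by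
      filter_upwards [hs] with h hh
      rw [smul_sub, ← hh, hΨx, smul_add, ← add_smul]
      have e1 : h / 2 + h / 2 = h := by ring
      rw [e1]
    refine heq.trans_isBigO ?_
    have h2 := hhalf.smul hΨO
    refine h2.trans ?_
    exact (isBigO_refl _ _).congr_left fun h => by
      rw [smul_eq_mul, pow_two]
  have hquad := (nsfd_aux_quadratic hΨ x).comp_tendsto hGt
  have hsq : (fun h => ‖G h - x‖ ^ 2) =O[nhds (0 : ℝ)] fun h => h ^ 2 :=
    hGx.norm_left.pow 2
  have hquad2 : (fun h => Ψ (G h) - Ψ x - fderiv ℝ Ψ x (G h - x))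
      =O[nhds (0 : ℝ)] fun h => h ^ 2 := hquad.trans hsq
  have hlin : (fun h => fderiv ℝ Ψ x (G h - x - h • c)) =O[nhds (0 : ℝ)]
      fun h => h ^ 2 :=
    ((fderiv ℝ Ψ x).isBigO_comp _ _).trans hstep2
  have hmid : (fun h => Ψ (G h) - Ψ x - h • fderiv ℝ Ψ x c)
      =O[nhds (0 : ℝ)] fun h => h ^ 2 := by
    refine (hquad2.add hlin).congr_left fun h => ?_
    simp only [map_sub, map_smul]
    abel
  have hfin : (fun h => G h - x - h • c - (h ^ 2 / 2) • fderiv ℝ Ψ x c)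
      =ᶠ[nhds (0 : ℝ)] fun h => (h / 2) • (Ψ (G h) - Ψ x - h • fderiv ℝ Ψ x c) := by
    filter_upwards [hs] with h hh
    rw [smul_sub, smul_sub, ← hh, hΨx, smul_add, ← add_smul, smul_smul]
    have e1 : h / 2 + h / 2 = h := by ring
    have e2 : h / 2 * h = h ^ 2 / 2 := by ring
    rw [e1, e2]
  refine hfin.trans_isBigO ?_
  refine (hhalf.smul hmid).trans ?_
  exact (isBigO_refl _ _).congr_left fun h => by
    rw [smul_eq_mul, pow_succ, pow_two]
    ring

end Aux

/-- Second-order accuracy of the NSFD scheme: the local truncation error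
`E(h) = u(h) - F(h,x)` satisfies `E(h) = O(h³)` as `h → 0`. -/
theorem nsfd_second_order {n : ℕ}
    (φ : (EuclideanSpace ℝ (Fin n) × EuclideanSpace ℝ (Fin n)) → EuclideanSpace ℝ (Fin n))
    (hφ : ContDiff ℝ 2 φ) (x : EuclideanSpace ℝ (Fin n))
    (u : ℝ → EuclideanSpace ℝ (Fin n)) (hu0 : u 0 = x)
    (hu : ∀ᶠ t in nhds (0 : ℝ), HasDerivAt u (φ (u t, u t)) t)
    (F : ℝ → EuclideanSpace ℝ (Fin n) → EuclideanSpace ℝ (Fin n))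
    (hscheme : ∀ᶠ h in nhds (0 : ℝ),
      F h x - x = (h / 2) • (φ (F h x, x) + φ (x, F h x)))
    (hF0 : F 0 x = x)
    (hFd : HasDerivAt (fun h : ℝ => F h x) (φ (x, x)) 0) :
    (fun h : ℝ => u h - F h x) =O[nhds 0] fun h : ℝ => h ^ 3 := by
  set m : EuclideanSpace ℝ (Fin n) :=
    fderiv ℝ φ (x, x) (φ (x, x), φ (x, x)) with hmdef
  have hφd : HasFDerivAt φ (fderiv ℝ φ (x, x)) (x, x) :=
    ((hφ.differentiable (by norm_num)) (x, x)).hasFDerivAt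
  have hf : ContDiff ℝ 2 (fun y : EuclideanSpace ℝ (Fin n) => φ (y, y)) := by
    exact hφ.comp (contDiff_id.prodMk contDiff_id)
  have hΨ : ContDiff ℝ 2 (fun y : EuclideanSpace ℝ (Fin n) => φ (y, x) + φ (x, y)) := by
    exact (hφ.comp (contDiff_id.prodMk contDiff_const)).add
      (hφ.comp (contDiff_const.prodMk contDiff_id))
  have hdiag : HasFDerivAt (fun y : EuclideanSpace ℝ (Fin n) => (y, y))
      ((ContinuousLinearMap.id ℝ (EuclideanSpace ℝ (Fin n))).prod
        (ContinuousLinearMap.id ℝ (EuclideanSpace ℝ (Fin n)))) x :=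
    (hasFDerivAt_id x).prodMk (hasFDerivAt_id x)
  have hleft : HasFDerivAt (fun y : EuclideanSpace ℝ (Fin n) => (y, x))
      ((ContinuousLinearMap.id ℝ (EuclideanSpace ℝ (Fin n))).prod
        (0 : EuclideanSpace ℝ (Fin n) →L[ℝ] EuclideanSpace ℝ (Fin n))) x :=
    (hasFDerivAt_id x).prodMk (hasFDerivAt_const x x)
  have hright : HasFDerivAt (fun y : EuclideanSpace ℝ (Fin n) => (x, y))
      ((0 : EuclideanSpace ℝ (Fin n) →L[ℝ] EuclideanSpace ℝ (Fin n)).prod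
        (ContinuousLinearMap.id ℝ (EuclideanSpace ℝ (Fin n)))) x :=
    (hasFDerivAt_const x x).prodMk (hasFDerivAt_id x)
  have h1 : HasFDerivAt (fun y : EuclideanSpace ℝ (Fin n) => φ (y, y))
      ((fderiv ℝ φ (x, x)).comp
        ((ContinuousLinearMap.id ℝ (EuclideanSpace ℝ (Fin n))).prod
          (ContinuousLinearMap.id ℝ (EuclideanSpace ℝ (Fin n))))) x := by
    exact hφd.comp (f := fun y : EuclideanSpace ℝ (Fin n) => (y, y)) x hdiag
  have h2 : HasFDerivAt (fun y : EuclideanSpace ℝ (Fin n) => φ (y, x) + φ (x, y))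
      ((fderiv ℝ φ (x, x)).comp
          ((ContinuousLinearMap.id ℝ (EuclideanSpace ℝ (Fin n))).prod
            (0 : EuclideanSpace ℝ (Fin n) →L[ℝ] EuclideanSpace ℝ (Fin n)))
        + (fderiv ℝ φ (x, x)).comp
          ((0 : EuclideanSpace ℝ (Fin n) →L[ℝ] EuclideanSpace ℝ (Fin n)).prod
            (ContinuousLinearMap.id ℝ (EuclideanSpace ℝ (Fin n))))) x := by
    exact (hφd.comp (f := fun y : EuclideanSpace ℝ (Fin n) => (y, x)) x hleft).add
      (hφd.comp (f := fun y : EuclideanSpace ℝ (Fin n) => (x, y)) x hright)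
  have hm1 : fderiv ℝ (fun y : EuclideanSpace ℝ (Fin n) => φ (y, y)) x (φ (x, x)) = m := by
    rw [h1.fderiv, hmdef]
    simp
  have hm2 : fderiv ℝ (fun y : EuclideanSpace ℝ (Fin n) => φ (y, x) + φ (x, y)) x
      (φ (x, x)) = m := by
    rw [h2.fderiv, hmdef]
    simp only [ContinuousLinearMap.add_apply, ContinuousLinearMap.coe_comp',
      Function.comp_apply, ContinuousLinearMap.prod_apply,
      ContinuousLinearMap.coe_id', id_eq, ContinuousLinearMap.zero_apply]
    rw [← map_add]
    congr 1
    simp [Prod.ext_iff]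
  have hC := nsfd_aux_exact hf hu0 hu hm1
  have hD := nsfd_aux_scheme hΨ (G := fun h : ℝ => F h x) (c := φ (x, x)) rfl
    hscheme hF0 hFd hm2
  refine (hC.sub hD).congr_left fun h => ?_
  show u h - x - h • φ (x, x) - (h ^ 2 / 2) • m -
      (F h x - x - h • φ (x, x) - (h ^ 2 / 2) • m) = u h - F h x
  abel
end

section
/- Let F : ℝ × ℝⁿ → ℝⁿ be continuous with F(0,x) = x for all x, let h̄ > 0, and suppose F is reversible for all h ∈ (0, h̄], i.e. F(−h, F(h,x)) = x for all x ∈ ℝⁿ and h ∈ (0, h̄]. Let D ⊆ ℝⁿ be a closed set satisfying D = closure(interior D). If for every h ∈ (0, h̄] the image F(−h, ·) of the boundary ∂D does not meet the interior of D, i.e. F(−h, ∂D) ∩ interior(D) = ∅, then D is invariant under F(h, ·) for every h ∈ (0, h̄): x ∈ D implies F(h,x) ∈ D. -/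
/-- A preconnected set meeting both a set and its complement meets the frontier. -/
lemma preconnected_inter_frontier_nonempty {α : Type*} [TopologicalSpace α]
    {s t : Set α} (hs : IsPreconnected s) (h1 : (s ∩ t).Nonempty)
    (h2 : (s \ t).Nonempty) : (s ∩ frontier t).Nonempty := by
  by_contra hfr
  rw [Set.not_nonempty_iff_eq_empty] at hfr
  have hsub : s ⊆ interior t ∪ interior tᶜ := by
    intro x hx
    have hxfr : x ∉ frontier t := fun h => (Set.eq_empty_iff_forall_notMem.1 hfr x) ⟨hx, h⟩
    rcases Classical.em (x ∈ closure t) with hc | hc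
    · left
      by_contra hint
      exact hxfr ⟨hc, hint⟩
    · right
      rw [interior_compl]
      exact hc
  have hne1 : (s ∩ interior t).Nonempty := by
    obtain ⟨x, hxs, hxt⟩ := h1
    rcases hsub hxs with h | h
    · exact ⟨x, hxs, h⟩
    · rw [interior_compl] at h
      exact absurd (subset_closure hxt) h
  have hne2 : (s ∩ interior tᶜ).Nonempty := by
    obtain ⟨x, hxs, hxt⟩ := h2
    rcases hsub hxs with h | h
    · exact absurd (interior_subset h) hxt
    · exact ⟨x, hxs, h⟩
  obtain ⟨x, hxs, hx1, hx2⟩ := hs (interior t) (interior tᶜ)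
    isOpen_interior isOpen_interior hsub hne1 hne2
  exact (interior_subset hx2) (interior_subset hx1)

/-- Domain invariance for reversible schemes:  if `F(-h, ∂D)` does not meet the
interior of the closed set `D = closure (interior D)` for any `h ∈ (0, h̄]`,
then `D` is invariant under `F(h,·)` for every `h ∈ (0, h̄)`. -/
theorem reversible_scheme_invariance {n : ℕ}
    (F : ℝ → EuclideanSpace ℝ (Fin n) → EuclideanSpace ℝ (Fin n))
    (hFcont : Continuous fun p : ℝ × EuclideanSpace ℝ (Fin n) => F p.1 p.2)
    (hF0 : ∀ x, F 0 x = x)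
    (hbar : ℝ) (hbarpos : 0 < hbar)
    (hrev : ∀ h ∈ Set.Ioc (0 : ℝ) hbar, ∀ x, F (-h) (F h x) = x)
    (D : Set (EuclideanSpace ℝ (Fin n))) (hDclosed : IsClosed D)
    (hD : D = closure (interior D))
    (hcond : ∀ h ∈ Set.Ioc (0 : ℝ) hbar, F (-h) '' frontier D ∩ interior D = ∅) :
    ∀ h ∈ Set.Ioo (0 : ℝ) hbar, ∀ x ∈ D, F h x ∈ D := by
  -- Step 1: the claim for points in the interior of D, and any h ∈ (0, h̄].
  have key : ∀ h ∈ Set.Ioc (0 : ℝ) hbar, ∀ x ∈ interior D, F h x ∈ D := by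
    rintro h ⟨h0, hh⟩ x hx
    by_contra hFx
    have hcont : Continuous fun t : ℝ => F t x :=
      hFcont.comp (continuous_id.prodMk continuous_const)
    have hconn : IsPreconnected ((fun t : ℝ => F t x) '' Set.Icc 0 h) :=
      isPreconnected_Icc.image _ hcont.continuousOn
    have h1 : (((fun t : ℝ => F t x) '' Set.Icc 0 h) ∩ D).Nonempty :=
      ⟨x, ⟨0, ⟨le_refl 0, h0.le⟩, hF0 x⟩, interior_subset hx⟩
    have h2 : (((fun t : ℝ => F t x) '' Set.Icc 0 h) \ D).Nonempty :=
      ⟨F h x, ⟨h, ⟨h0.le, le_refl h⟩, rfl⟩, hFx⟩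
    obtain ⟨y, ⟨t, ht, rfl⟩, hyf⟩ :=
      preconnected_inter_frontier_nonempty hconn h1 h2
    have ht0 : 0 < t := by
      rcases lt_or_eq_of_le ht.1 with h' | h'
      · exact h'
      · exfalso
        subst h'
        simp only [hF0] at hyf
        exact hyf.2 hx
    have htIoc : t ∈ Set.Ioc (0 : ℝ) hbar := ⟨ht0, ht.2.trans hh⟩
    have hxmem : x ∈ F (-t) '' frontier D ∩ interior D :=
      ⟨⟨F t x, hyf, hrev t htIoc x⟩, hx⟩
    rw [hcond t htIoc] at hxmem
    exact hxmem
  -- Step 2: extend to all of D by density of the interior.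
  intro h hh x hxD
  have hclosed : IsClosed {y | F h y ∈ D} :=
    hDclosed.preimage (hFcont.comp (continuous_const.prodMk continuous_id))
  have hsub : closure (interior D) ⊆ {y | F h y ∈ D} :=
    closure_minimal (fun y hy => key h ⟨hh.1, hh.2.le⟩ y hy) hclosed
  exact hsub (hD ▸ hxD)
end

section
/- Let F : ℝ × ℝⁿ → ℝⁿ be continuous with F(0,x) = x for all x, let h̄ > 0, and suppose F is reversible for all h ∈ (0, h̄], i.e. F(−h, F(h,x)) = x for all x and all h ∈ (0, h̄]. Let D ⊆ ℝⁿ be a nonempty closed convex set satisfying D = closure(interior D). Suppose that for every h ∈ (0, h̄], every x ∈ ∂D, and every outer normal vector n to D at x (i.e., every n such that the open ball of center x + n and radius ‖n‖ misses interior(D)), one has ⟨n, F(−h,x) − x⟩ ≥ 0. Then D is invariant under F(h, ·) for every h ∈ (0, h̄): x ∈ D implies F(h,x) ∈ D. -/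
/-- Discrete tangent condition for domain invariance of a reversible scheme:
if at every boundary point `x` of the nonempty closed convex set
`D = closure (interior D)` and every outer normal vector `nv` one has
`⟪nv, F(-h,x) - x⟫ ≥ 0` for all `h ∈ (0, h̄]`, then `D` is invariant under
`F(h,·)` for every `h ∈ (0, h̄)`. -/
theorem reversible_scheme_tangent_invariance {n : ℕ}
    (F : ℝ → EuclideanSpace ℝ (Fin n) → EuclideanSpace ℝ (Fin n))
    (hFcont : Continuous fun p : ℝ × EuclideanSpace ℝ (Fin n) => F p.1 p.2)
    (hF0 : ∀ x, F 0 x = x)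
    (hbar : ℝ) (hbarpos : 0 < hbar)
    (hrev : ∀ h ∈ Set.Ioc (0 : ℝ) hbar, ∀ x, F (-h) (F h x) = x)
    (D : Set (EuclideanSpace ℝ (Fin n))) (hDne : D.Nonempty)
    (hDclosed : IsClosed D) (hDconv : Convex ℝ D)
    (hD : D = closure (interior D))
    (hcond : ∀ h ∈ Set.Ioc (0 : ℝ) hbar, ∀ x ∈ frontier D,
      ∀ nv : EuclideanSpace ℝ (Fin n),
        Metric.ball (x + nv) ‖nv‖ ∩ interior D = ∅ →
          (0 : ℝ) ≤ inner ℝ nv (F (-h) x - x)) :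
    ∀ h ∈ Set.Ioo (0 : ℝ) hbar, ∀ x ∈ D, F h x ∈ D := by
  intro h hh x hxD
  by_contra hy
  -- Step 1: replace `x` by a point `x₀` of the interior with `F h x₀ ∉ D`.
  have hFh : Continuous fun u : EuclideanSpace ℝ (Fin n) => F h u :=
    hFcont.comp (continuous_const.prodMk continuous_id)
  have hUopen : IsOpen {u : EuclideanSpace ℝ (Fin n) | F h u ∉ D} :=
    hDclosed.isOpen_compl.preimage hFh
  have hxcl : x ∈ closure (interior D) := by rw [← hD]; exact hxD
  obtain ⟨x₀, hx₀U, hx₀int⟩ :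
      ({u : EuclideanSpace ℝ (Fin n) | F h u ∉ D} ∩ interior D).Nonempty :=
    (mem_closure_iff.mp hxcl) _ hUopen hy
  -- Step 2: last time the trajectory is in D
  have hg : Continuous fun t : ℝ => F t x₀ :=
    hFcont.comp (continuous_id.prodMk continuous_const)
  set S : Set ℝ := Set.Icc 0 h ∩ {t | F t x₀ ∈ D} with hS
  have hScpt : IsCompact S :=
    isCompact_Icc.inter_right (hDclosed.preimage hg)
  have h0S : (0 : ℝ) ∈ S :=
    ⟨⟨le_refl 0, le_of_lt hh.1⟩, by simpa [hF0 x₀] using interior_subset hx₀int⟩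
  obtain ⟨t₀, ht₀S, ht₀ub⟩ := hScpt.exists_isGreatest ⟨0, h0S⟩
  have ht₀0 : 0 ≤ t₀ := ht₀S.1.1
  have ht₀h : t₀ < h := by
    rcases lt_or_eq_of_le ht₀S.1.2 with hlt | heq
    · exact hlt
    · exact absurd (heq ▸ ht₀S.2) hx₀U
  set z := F t₀ x₀ with hz
  have hzD : z ∈ D := ht₀S.2
  have hnotin : ∀ t, t₀ < t → t ≤ h → F t x₀ ∉ D := by
    intro t h1 h2 hmem
    exact absurd (ht₀ub ⟨⟨le_trans ht₀0 (le_of_lt h1), h2⟩, hmem⟩) (not_le.mpr h1)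
  -- z is not in the interior of D
  have hznotint : z ∉ interior D := by
    intro hzint
    have : {t : ℝ | F t x₀ ∈ interior D} ∈ nhds t₀ :=
      hg.continuousAt.preimage_mem_nhds (isOpen_interior.mem_nhds hzint)
    obtain ⟨ε, hεpos, hε⟩ := Metric.mem_nhds_iff.mp this
    have ht' : t₀ < min (t₀ + ε) h := lt_min (lt_add_of_pos_right t₀ hεpos) ht₀h
    obtain ⟨s, hs1, hs2⟩ := exists_between ht'
    have hsball : s ∈ Metric.ball t₀ ε := by
      rw [Metric.mem_ball, Real.dist_eq, abs_of_pos (by linarith)]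
      have := lt_of_lt_of_le hs2 (min_le_left _ _)
      linarith
    exact hnotin s hs1 (le_of_lt (lt_of_lt_of_le hs2 (min_le_right _ _)))
      (interior_subset (hε hsball))
  have ht₀pos : 0 < t₀ := by
    rcases lt_or_eq_of_le ht₀0 with hlt | heq
    · exact hlt
    · exfalso; apply hznotint; rw [hz, ← heq, hF0]; exact hx₀int
  have hzfr : z ∈ frontier D := by
    rw [frontier, hDclosed.closure_eq]
    exact ⟨hzD, hznotint⟩
  -- Step 3: separating hyperplane at z
  obtain ⟨f, hf⟩ := geometric_hahn_banach_open_point (hDconv.interior) isOpen_interior hznotint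
  set ν : EuclideanSpace ℝ (Fin n) := (InnerProductSpace.toDual ℝ _).symm f with hν
  have hνinner : ∀ u, (inner ℝ ν u : ℝ) = f u := fun u =>
    InnerProductSpace.toDual_symm_apply
  -- ν is an outer normal at z
  have hball : Metric.ball (z + ν) ‖ν‖ ∩ interior D = ∅ := by
    rw [Set.eq_empty_iff_forall_notMem]
    rintro u ⟨hu1, hu2⟩
    have h1 : ‖u - z - ν‖ < ‖ν‖ := by
      have := Metric.mem_ball.mp hu1
      rwa [dist_eq_norm, show u - (z + ν) = u - z - ν by abel] at this
    have h2 : ‖u - z - ν‖ ^ 2 < ‖ν‖ ^ 2 :=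
      sq_lt_sq' (by linarith [norm_nonneg (u - z - ν)]) h1
    have h3 : ‖u - z‖ ^ 2 - 2 * (inner ℝ (u - z) ν : ℝ) + ‖ν‖ ^ 2 < ‖ν‖ ^ 2 := by
      rwa [← norm_sub_sq_real]
    have h4 : (0:ℝ) < inner ℝ (u - z) ν := by nlinarith [sq_nonneg ‖u - z‖]
    have h5 : (inner ℝ ν (u - z) : ℝ) < 0 := by
      rw [hνinner, map_sub]
      linarith [hf u hu2]
    rw [real_inner_comm] at h4
    linarith
  have ht₀mem : t₀ ∈ Set.Ioc (0 : ℝ) hbar := ⟨ht₀pos, le_of_lt (ht₀h.trans hh.2)⟩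
  have hkey := hcond t₀ ht₀mem z hzfr ν hball
  have hrevz : F (-t₀) z = x₀ := hrev t₀ ht₀mem x₀
  rw [hrevz] at hkey
  have : (inner ℝ ν (x₀ - z) : ℝ) < 0 := by
    rw [hνinner, map_sub]
    linarith [hf x₀ hx₀int]
  linarith
end

section
/- Let P, Q : ℝⁿ → M_n(ℝ), A ∈ M_n(ℝ), b ∈ ℝⁿ satisfy the two-sided representation property P(x)·y + A·(x+y) + b = Q(y)·x + A·(x+y) + b for all x, y ∈ ℝⁿ (equivalently, P(x)·y = Q(y)·x for all x, y). Let h ∈ ℝ and x ∈ ℝⁿ, suppose M(x) = I − (h/2)(P(x)+Q(x)) − h·A is invertible, and set y = M(x)⁻¹·((I + h·A)x + h·b). Suppose further that N(y) = I + (h/2)(P(y)+Q(y)) + h·A is invertible. Then N(y)⁻¹·((I − h·A)·y − h·b) = x; that is, the mass-action NSFD map satisfies F(−h, F(h,x)) = x (time-reversibility). -/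
/-- Time-reversibility of the mass-action NSFD map: with
`y = F(h,x) = (I - (h/2)(P(x)+Q(x)) - hA)⁻¹((I + hA)x + hb)`, one has
`F(-h, y) = (I + (h/2)(P(y)+Q(y)) + hA)⁻¹((I - hA)y - hb) = x`,
provided `P(x)y + A(x+y) + b = Q(y)x + A(x+y) + b` for all `x, y`. -/
theorem mass_action_scheme_reversible {n : ℕ}
    (P Q : (Fin n → ℝ) → Matrix (Fin n) (Fin n) ℝ)
    (A : Matrix (Fin n) (Fin n) ℝ) (b : Fin n → ℝ)
    (hPQ : ∀ x y : Fin n → ℝ,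
      (P x).mulVec y + A.mulVec (x + y) + b
        = (Q y).mulVec x + A.mulVec (x + y) + b)
    (h : ℝ) (x : Fin n → ℝ)
    (hM : IsUnit (1 - (h / 2) • (P x + Q x) - h • A))
    (y : Fin n → ℝ)
    (hy : y = (1 - (h / 2) • (P x + Q x) - h • A)⁻¹.mulVec
      (((1 : Matrix (Fin n) (Fin n) ℝ) + h • A).mulVec x + h • b))
    (hN : IsUnit (1 + (h / 2) • (P y + Q y) + h • A)) :
    (1 + (h / 2) • (P y + Q y) + h • A)⁻¹.mulVec
      (((1 : Matrix (Fin n) (Fin n) ℝ) - h • A).mulVec y - h • b) = x := by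
  have hPQ' : ∀ a c : Fin n → ℝ, (P a).mulVec c = (Q c).mulVec a := by
    intro a c
    have := hPQ a c
    exact add_right_cancel (add_right_cancel this)
  set M : Matrix (Fin n) (Fin n) ℝ := 1 - (h / 2) • (P x + Q x) - h • A with hMdef
  set N : Matrix (Fin n) (Fin n) ℝ := 1 + (h / 2) • (P y + Q y) + h • A with hNdef
  have hMdet : IsUnit M.det := (Matrix.isUnit_iff_isUnit_det M).mp hM
  have hNdet : IsUnit N.det := (Matrix.isUnit_iff_isUnit_det N).mp hN
  have hMy : M.mulVec y
      = ((1 : Matrix (Fin n) (Fin n) ℝ) + h • A).mulVec x + h • b := by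
    rw [hy, Matrix.mulVec_mulVec, Matrix.mul_nonsing_inv M hMdet, Matrix.one_mulVec]
  have key : N.mulVec x
      = ((1 : Matrix (Fin n) (Fin n) ℝ) - h • A).mulVec y - h • b := by
    have hswap : (P y + Q y).mulVec x = (P x + Q x).mulVec y := by
      rw [Matrix.add_mulVec, Matrix.add_mulVec, hPQ' y x, ← hPQ' x y, add_comm]
    rw [hMdef] at hMy
    rw [hNdef]
    simp only [Matrix.add_mulVec, Matrix.sub_mulVec, Matrix.one_mulVec,
      Matrix.smul_mulVec] at hMy hswap ⊢
    rw [hswap]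
    linear_combination -hMy
  rw [← key, Matrix.mulVec_mulVec, Matrix.nonsing_inv_mul N hNdet, Matrix.one_mulVec]
end
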